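/- Let n ≥ 1, let p ∈ ℝⁿ, let V : ℝⁿ → ℝ, let λ ∈ ℝ, and let r, s : ℝⁿ → ℝ be ℤⁿ-periodic C² functions with r > 0 and s > 0 everywhere, satisfying −(1/2)Δr(x) + p·∇r(x) − V(x)r(x) = λ r(x) for all x, and −(1/2)Δs(x) − p·∇s(x) − V(x)s(x) = μ s(x) for all x, for some μ ∈ ℝ. Then λ = μ. -/

import Mathlib

open scoped RealInnerProductSpace
open MeasureTheory

/-- The Euclidean Laplacian: sum of second partial derivatives. -/
noncomputable def lap {n : ℕ} (f : EuclideanSpace ℝ (Fin n) → ℝ)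
    (x : EuclideanSpace ℝ (Fin n)) : ℝ :=
  ∑ i : Fin n,
    fderiv ℝ (fun y => fderiv ℝ f y (EuclideanSpace.single i 1)) x (EuclideanSpace.single i 1)

/-- The divergence of a vector field: sum of partial derivatives of the components. -/
noncomputable def dvg {n : ℕ} (F : EuclideanSpace ℝ (Fin n) → EuclideanSpace ℝ (Fin n))
    (x : EuclideanSpace ℝ (Fin n)) : ℝ :=
  ∑ i : Fin n, fderiv ℝ (fun y => F y i) x (EuclideanSpace.single i 1)

/-- A function on ℝⁿ is ℤⁿ-periodic if it is invariant under translation by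
every integer vector. -/
def IsZnPeriodic {n : ℕ} {α : Type*} (f : EuclideanSpace ℝ (Fin n) → α) : Prop :=
  ∀ (x : EuclideanSpace ℝ (Fin n)) (k : Fin n → ℤ),
    f (x + ∑ i : Fin n, (k i : ℝ) • EuclideanSpace.single i (1 : ℝ)) = f x

/-- The unit cube [0,1]ⁿ in ℝⁿ. -/
def unitCube (n : ℕ) : Set (EuclideanSpace ℝ (Fin n)) :=
  {x | ∀ i, x i ∈ Set.Icc (0 : ℝ) 1}

/-! ### Auxiliary definitions and lemmas -/

noncomputable def eqv (n : ℕ) : (Fin n → ℝ) ≃L[ℝ] EuclideanSpace ℝ (Fin n) :=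
  (EuclideanSpace.equiv (Fin n) ℝ).symm

@[simp] lemma eqv_single {n : ℕ} (i : Fin n) :
    eqv n (Pi.single i 1) = EuclideanSpace.single i (1 : ℝ) := rfl

@[simp] lemma eqv_single' {n : ℕ} (i : Fin n) :
    (eqv n : (Fin n → ℝ) →L[ℝ] EuclideanSpace ℝ (Fin n)) (Pi.single i 1)
      = EuclideanSpace.single i (1 : ℝ) := rfl

/-- The `i`-th partial derivative. -/
noncomputable def pd {n : ℕ} (f : EuclideanSpace ℝ (Fin n) → ℝ) (i : Fin n)
    (x : EuclideanSpace ℝ (Fin n)) : ℝ :=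
  fderiv ℝ f x (EuclideanSpace.single i 1)

lemma lap_eq_sum_pd {n : ℕ} (f : EuclideanSpace ℝ (Fin n) → ℝ) (x : EuclideanSpace ℝ (Fin n)) :
    lap f x = ∑ i, pd (pd f i) i x := rfl

lemma pd_contDiff {n : ℕ} {f : EuclideanSpace ℝ (Fin n) → ℝ} (hf : ContDiff ℝ 2 f) (i : Fin n) :
    ContDiff ℝ 1 (pd f i) :=
  (hf.fderiv_right (by norm_num)).clm_apply contDiff_const

lemma gradient_apply_single {n : ℕ} (f : EuclideanSpace ℝ (Fin n) → ℝ)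
    (x : EuclideanSpace ℝ (Fin n)) (i : Fin n) :
    gradient f x i = pd f i x := by
  have : pd f i x = ⟪gradient f x, EuclideanSpace.single i 1⟫ := by
    simp [gradient, pd]
  rw [this, EuclideanSpace.inner_single_right]
  simp

lemma inner_gradient_eq {n : ℕ} (p : EuclideanSpace ℝ (Fin n))
    (f : EuclideanSpace ℝ (Fin n) → ℝ) (x : EuclideanSpace ℝ (Fin n)) :
    ⟪p, gradient f x⟫ = ∑ i, p i * pd f i x := by
  rw [PiLp.inner_apply]
  refine Finset.sum_congr rfl fun i _ => ?_
  rw [gradient_apply_single]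
  simp [RCLike.inner_apply, mul_comm]

lemma per_single {n : ℕ} {α : Type*} {f : EuclideanSpace ℝ (Fin n) → α} (hf : IsZnPeriodic f)
    (x : EuclideanSpace ℝ (Fin n)) (i : Fin n) :
    f (x + EuclideanSpace.single i (1 : ℝ)) = f x := by
  have h := hf x (Pi.single i 1)
  have hsum : (∑ j : Fin n, (((Pi.single i 1 : Fin n → ℤ) j : ℝ)) • EuclideanSpace.single j (1:ℝ))
      = EuclideanSpace.single i (1:ℝ) := by
    rw [Finset.sum_eq_single i]
    · simp
    · intro j _ hj
      simp [Pi.single_apply, hj]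
    · simp
  rwa [hsum] at h

lemma fderiv_translate {E F : Type*} [NormedAddCommGroup E] [NormedSpace ℝ E]
    [NormedAddCommGroup F] [NormedSpace ℝ F] {f : E → F} (hf : Differentiable ℝ f) (c : E)
    (x : E) : fderiv ℝ (fun y => f (y + c)) x = fderiv ℝ f (x + c) := by
  have h1 : HasFDerivAt (fun y => f (y + c)) (fderiv ℝ f (x + c)) x := by
    have := (hf (x + c)).hasFDerivAt.comp x ((hasFDerivAt_id x).add_const c)
    exact this
  exact h1.fderiv

lemma fderiv_per {E F : Type*} [NormedAddCommGroup E] [NormedSpace ℝ E]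
    [NormedAddCommGroup F] [NormedSpace ℝ F] {f : E → F} (hf : Differentiable ℝ f) {c : E}
    (hper : ∀ x, f (x + c) = f x) (x : E) : fderiv ℝ f (x + c) = fderiv ℝ f x := by
  rw [← fderiv_translate hf c x]
  congr 1
  funext y
  exact hper y

lemma insertNth_one_eq {m : ℕ} (i : Fin (m+1)) (z : Fin m → ℝ) :
    (Fin.insertNth (α := fun _ => ℝ) i 1 z)
      = Fin.insertNth (α := fun _ => ℝ) i 0 z + Pi.single i 1 := by
  funext j
  rcases eq_or_ne j i with rfl | hj
  · simp
  · obtain ⟨k, rfl⟩ := Fin.exists_succAbove_eq hj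
    simp [Pi.single_eq_of_ne hj]

/-- The vector field (transferred to pi space) whose divergence is
`(lam - mu) * r * s`. -/
noncomputable def phi {n : ℕ} (p : EuclideanSpace ℝ (Fin n))
    (r s : EuclideanSpace ℝ (Fin n) → ℝ) (i : Fin n) (y : Fin n → ℝ) : ℝ :=
  r (eqv n y) * s (eqv n y) * p i
    + 2⁻¹ * (r (eqv n y) * pd s i (eqv n y) - s (eqv n y) * pd r i (eqv n y))

lemma phi_hasFDerivAt {n : ℕ} (p : EuclideanSpace ℝ (Fin n))
    (r s : EuclideanSpace ℝ (Fin n) → ℝ) (hr : ContDiff ℝ 2 r) (hs : ContDiff ℝ 2 s)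
    (i : Fin n) (y : Fin n → ℝ) :
    HasFDerivAt (phi p r s i)
      ((p i • ((r (eqv n y) • ((fderiv ℝ s (eqv n y)).comp (eqv n : (Fin n → ℝ) →L[ℝ] _))
          + s (eqv n y) • ((fderiv ℝ r (eqv n y)).comp (eqv n : (Fin n → ℝ) →L[ℝ] _)))))
        + (2⁻¹ : ℝ) • (((r (eqv n y) • ((fderiv ℝ (pd s i) (eqv n y)).comp (eqv n : (Fin n → ℝ) →L[ℝ] _))
              + pd s i (eqv n y) • ((fderiv ℝ r (eqv n y)).comp (eqv n : (Fin n → ℝ) →L[ℝ] _)))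
            - (s (eqv n y) • ((fderiv ℝ (pd r i) (eqv n y)).comp (eqv n : (Fin n → ℝ) →L[ℝ] _))
              + pd r i (eqv n y) • ((fderiv ℝ s (eqv n y)).comp (eqv n : (Fin n → ℝ) →L[ℝ] _)))))) y := by
  have hrd := hr.differentiable (by norm_num)
  have hsd := hs.differentiable (by norm_num)
  have hDr : Differentiable ℝ (pd r i) := (pd_contDiff hr i).differentiable one_ne_zero
  have hDs : Differentiable ℝ (pd s i) := (pd_contDiff hs i).differentiable one_ne_zero
  have hE : HasFDerivAt (eqv n) ((eqv n : (Fin n → ℝ) →L[ℝ] EuclideanSpace ℝ (Fin n))) y :=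
    (eqv n).hasFDerivAt
  have hR : HasFDerivAt (fun z => r (eqv n z))
      ((fderiv ℝ r (eqv n y)).comp (eqv n : (Fin n → ℝ) →L[ℝ] _)) y :=
    ((hrd (eqv n y)).hasFDerivAt).comp y hE
  have hS : HasFDerivAt (fun z => s (eqv n z))
      ((fderiv ℝ s (eqv n y)).comp (eqv n : (Fin n → ℝ) →L[ℝ] _)) y :=
    ((hsd (eqv n y)).hasFDerivAt).comp y hE
  have hDR : HasFDerivAt (fun z => pd r i (eqv n z))
      ((fderiv ℝ (pd r i) (eqv n y)).comp (eqv n : (Fin n → ℝ) →L[ℝ] _)) y :=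
    ((hDr (eqv n y)).hasFDerivAt).comp y hE
  have hDS : HasFDerivAt (fun z => pd s i (eqv n z))
      ((fderiv ℝ (pd s i) (eqv n y)).comp (eqv n : (Fin n → ℝ) →L[ℝ] _)) y :=
    ((hDs (eqv n y)).hasFDerivAt).comp y hE
  exact ((hR.mul hS).mul_const (p i)).add (((hR.mul hDS).sub (hS.mul hDR)).const_mul 2⁻¹)

lemma phi_differentiable {n : ℕ} (p : EuclideanSpace ℝ (Fin n))
    (r s : EuclideanSpace ℝ (Fin n) → ℝ) (hr : ContDiff ℝ 2 r) (hs : ContDiff ℝ 2 s)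
    (i : Fin n) : Differentiable ℝ (phi p r s i) :=
  fun y => (phi_hasFDerivAt p r s hr hs i y).differentiableAt

lemma phi_fderiv_single {n : ℕ} (p : EuclideanSpace ℝ (Fin n))
    (r s : EuclideanSpace ℝ (Fin n) → ℝ) (hr : ContDiff ℝ 2 r) (hs : ContDiff ℝ 2 s)
    (i : Fin n) (y : Fin n → ℝ) :
    fderiv ℝ (phi p r s i) y (Pi.single i 1) =
      (pd r i (eqv n y) * s (eqv n y) + r (eqv n y) * pd s i (eqv n y)) * p i
        + 2⁻¹ * ((pd r i (eqv n y) * pd s i (eqv n y) + r (eqv n y) * pd (pd s i) i (eqv n y))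
          - (pd s i (eqv n y) * pd r i (eqv n y) + s (eqv n y) * pd (pd r i) i (eqv n y))) := by
  rw [(phi_hasFDerivAt p r s hr hs i y).fderiv]
  simp only [ContinuousLinearMap.add_apply, ContinuousLinearMap.smul_apply,
    ContinuousLinearMap.sub_apply, ContinuousLinearMap.comp_apply, ContinuousLinearMap.coe_coe,
    ContinuousLinearEquiv.coe_coe, eqv_single, eqv_single', smul_eq_mul]
  unfold pd
  ring

lemma phi_per {n : ℕ} (p : EuclideanSpace ℝ (Fin n))
    (r s : EuclideanSpace ℝ (Fin n) → ℝ) (hr : ContDiff ℝ 2 r) (hs : ContDiff ℝ 2 s)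
    (hrp : IsZnPeriodic r) (hsp : IsZnPeriodic s) (i : Fin n) (w : Fin n → ℝ) :
    phi p r s i (w + Pi.single i 1) = phi p r s i w := by
  have hrd := hr.differentiable (by norm_num)
  have hsd := hs.differentiable (by norm_num)
  have hcr : ∀ x, r (x + EuclideanSpace.single i (1:ℝ)) = r x := fun x => per_single hrp x i
  have hcs : ∀ x, s (x + EuclideanSpace.single i (1:ℝ)) = s x := fun x => per_single hsp x i
  have e_add : eqv n (w + Pi.single i 1) = eqv n w + EuclideanSpace.single i (1:ℝ) := by
    rw [map_add, eqv_single]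
  have hpdr : pd r i (eqv n w + EuclideanSpace.single i (1:ℝ)) = pd r i (eqv n w) := by
    unfold pd; rw [fderiv_per hrd hcr]
  have hpds : pd s i (eqv n w + EuclideanSpace.single i (1:ℝ)) = pd s i (eqv n w) := by
    unfold pd; rw [fderiv_per hsd hcs]
  unfold phi
  rw [e_add, hcr, hcs, hpdr, hpds]

/-- two positive ℤⁿ-periodic C² eigenfunctions of the mutually dual
operators −(1/2)Δ + p·∇ − V and −(1/2)Δ − p·∇ − V have the same eigenvalue. -/
theorem dual_eigenvalues_equal (n : ℕ) (hn : 1 ≤ n)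
    (p : EuclideanSpace ℝ (Fin n)) (V : EuclideanSpace ℝ (Fin n) → ℝ) (lam mu : ℝ)
    (r s : EuclideanSpace ℝ (Fin n) → ℝ)
    (hr : ContDiff ℝ 2 r) (hs : ContDiff ℝ 2 s)
    (hrp : IsZnPeriodic r) (hsp : IsZnPeriodic s)
    (hrpos : ∀ x, 0 < r x) (hspos : ∀ x, 0 < s x)
    (heq1 : ∀ x, -(1/2) * lap r x + ⟪p, gradient r x⟫ - V x * r x = lam * r x)
    (heq2 : ∀ x, -(1/2) * lap s x - ⟪p, gradient s x⟫ - V x * s x = mu * s x) :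
    lam = mu := by
  obtain ⟨m, rfl⟩ : ∃ m, n = m + 1 := ⟨n - 1, (Nat.succ_pred_eq_of_pos hn).symm⟩
  -- the divergence of the vector field `phi` equals `(lam - mu) * r * s`
  have hsum : ∀ y : Fin (m+1) → ℝ,
      (∑ i, fderiv ℝ (phi p r s i) y (Pi.single i 1))
        = (lam - mu) * (r (eqv (m+1) y) * s (eqv (m+1) y)) := by
    intro y
    set x := eqv (m+1) y with hx
    have h1 := heq1 x
    have h2 := heq2 x
    rw [lap_eq_sum_pd, inner_gradient_eq] at h1
    rw [lap_eq_sum_pd, inner_gradient_eq] at h2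
    rw [Finset.sum_congr rfl fun i _ => phi_fderiv_single p r s hr hs i y]
    have hexp : ((∑ i, p i * pd r i x) * s x + (∑ i, p i * pd s i x) * r x
          + 2⁻¹ * (r x * ∑ i, pd (pd s i) i x) - 2⁻¹ * (s x * ∑ i, pd (pd r i) i x))
        = ∑ i, ((pd r i x * s x + r x * pd s i x) * p i
          + 2⁻¹ * ((pd r i x * pd s i x + r x * pd (pd s i) i x)
            - (pd s i x * pd r i x + s x * pd (pd r i) i x))) := by
      simp only [Finset.sum_mul, Finset.mul_sum, ← Finset.sum_add_distrib,
        ← Finset.sum_sub_distrib]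
      exact Finset.sum_congr rfl fun i _ => by ring
    rw [← hexp]
    linear_combination s x * h1 - r x * h2
  -- apply the divergence theorem on the unit cube in pi space
  have hle01 : (0 : Fin (m+1) → ℝ) ≤ 1 := fun i => by norm_num
  have hcont : Continuous fun y : Fin (m+1) → ℝ => (lam - mu) * (r (eqv (m+1) y) * s (eqv (m+1) y)) := by
    have hrc : Continuous r := hr.continuous
    have hsc : Continuous s := hs.continuous
    fun_prop
  have hfun : (fun y : Fin (m+1) → ℝ => ∑ i, fderiv ℝ (phi p r s i) y (Pi.single i 1))
      = fun y => (lam - mu) * (r (eqv (m+1) y) * s (eqv (m+1) y)) := funext hsum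
  have Hi : IntegrableOn (fun y : Fin (m+1) → ℝ => ∑ i, fderiv ℝ (phi p r s i) y (Pi.single i 1))
      (Set.Icc 0 1) volume := by
    rw [hfun]
    exact hcont.continuousOn.integrableOn_compact isCompact_Icc
  have key := integral_divergence_of_hasFDerivAt_off_countable (n := m)
    (0 : Fin (m+1) → ℝ) 1 hle01 (fun y i => phi p r s i y)
    (fun y => ContinuousLinearMap.pi fun i => fderiv ℝ (phi p r s i) y) ∅ Set.countable_empty
    (continuousOn_pi.2 fun i => (phi_differentiable p r s hr hs i).continuous.continuousOn)
    (fun y _ => hasFDerivAt_pi.2 fun i => ((phi_differentiable p r s hr hs i) y).hasFDerivAt)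
    (by
      simpa only [ContinuousLinearMap.pi_apply] using Hi)
  simp only [ContinuousLinearMap.pi_apply] at key
  -- all boundary terms cancel by periodicity
  have hfaces : ∀ i : Fin (m+1),
      ((∫ z in Set.Icc ((0 : Fin (m+1) → ℝ) ∘ i.succAbove) ((1 : Fin (m+1) → ℝ) ∘ i.succAbove),
          phi p r s i (i.insertNth ((1 : Fin (m+1) → ℝ) i) z))
        - ∫ z in Set.Icc ((0 : Fin (m+1) → ℝ) ∘ i.succAbove) ((1 : Fin (m+1) → ℝ) ∘ i.succAbove),
          phi p r s i (i.insertNth ((0 : Fin (m+1) → ℝ) i) z)) = 0 := by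
    intro i
    have hpt : ∀ z : Fin m → ℝ,
        phi p r s i (i.insertNth ((1 : Fin (m+1) → ℝ) i) z)
          = phi p r s i (i.insertNth ((0 : Fin (m+1) → ℝ) i) z) := by
      intro z
      have h1 : ((1 : Fin (m+1) → ℝ) i) = (1 : ℝ) := rfl
      have h0 : ((0 : Fin (m+1) → ℝ) i) = (0 : ℝ) := rfl
      rw [h1, h0, insertNth_one_eq, phi_per p r s hr hs hrp hsp i]
    rw [sub_eq_zero]
    exact integral_congr_ae (Filter.Eventually.of_forall fun z => hpt z)
  rw [hfun] at key
  rw [Finset.sum_congr rfl fun i _ => hfaces i, Finset.sum_const, smul_zero] at key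
  -- the integral of `r * s` over the cube is positive
  have hrs_cont : Continuous fun y : Fin (m+1) → ℝ => r (eqv (m+1) y) * s (eqv (m+1) y) := by
    have hrc : Continuous r := hr.continuous
    have hsc : Continuous s := hs.continuous
    fun_prop
  have hpos : 0 < ∫ y in Set.Icc (0 : Fin (m+1) → ℝ) 1, r (eqv (m+1) y) * s (eqv (m+1) y) := by
    rw [setIntegral_pos_iff_support_of_nonneg_ae]
    · have hsupp : (Function.support fun y : Fin (m+1) → ℝ => r (eqv (m+1) y) * s (eqv (m+1) y))
          = Set.univ := by
        ext y
        simp [Function.support, (mul_pos (hrpos _) (hspos _)).ne']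
      rw [hsupp, Set.univ_inter, Real.volume_Icc_pi]
      simp
    · exact Filter.Eventually.of_forall fun y => by
        simpa using (mul_pos (hrpos (eqv (m+1) y)) (hspos (eqv (m+1) y))).le
    · exact hrs_cont.continuousOn.integrableOn_compact isCompact_Icc
  rw [integral_const_mul] at key
  have := mul_eq_zero.1 key
  rcases this with h | h
  · linarith [sub_eq_zero.1 h]
  · exact absurd h hpos.ne'
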